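/- Let M > 0 and σ > 0, and let (g_n)_{n≥1} and g be Borel probability measures on ℝ whose supports are contained in [−M, M]. Write g * φ_τ(x) = ∫ φ_τ(x − u) dg(u). If ∫_ℝ (g_n * φ_σ(x) − g * φ_σ(x))² dx → 0 as n → ∞, then for every fixed τ > 0 one also has ∫_ℝ (g_n * φ_τ(x) − g * φ_τ(x))² dx → 0 as n → ∞. -/

import Mathlib

open MeasureTheory Filter

/-- The density of the `N(0, τ²)` distribution. -/
noncomputable def gaussDensity (τ x : ℝ) : ℝ :=
  (τ * Real.sqrt (2 * Real.pi))⁻¹ * Real.exp (-(x ^ 2) / (2 * τ ^ 2))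

namespace MixAux

lemma gd_nonneg {s : ℝ} (hs : 0 < s) (x : ℝ) : 0 ≤ gaussDensity s x := by
  unfold gaussDensity
  have := Real.pi_pos
  positivity

lemma gd_le {s : ℝ} (hs : 0 < s) (x : ℝ) : gaussDensity s x ≤ gaussDensity s 0 := by
  unfold gaussDensity
  have h1 : (0:ℝ) ≤ (s * Real.sqrt (2 * Real.pi))⁻¹ := by
    have := Real.pi_pos
    positivity
  have h2 : Real.exp (-(x ^ 2) / (2 * s ^ 2)) ≤ 1 :=
    Real.exp_le_one_iff.mpr
      (div_nonpos_of_nonpos_of_nonneg (neg_nonpos.mpr (sq_nonneg x)) (by positivity))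
  calc (s * Real.sqrt (2 * Real.pi))⁻¹ * Real.exp (-(x ^ 2) / (2 * s ^ 2))
      ≤ (s * Real.sqrt (2 * Real.pi))⁻¹ * 1 := mul_le_mul_of_nonneg_left h2 h1
    _ = (s * Real.sqrt (2 * Real.pi))⁻¹ * Real.exp (-(0 ^ 2) / (2 * s ^ 2)) := by norm_num

lemma gd_cont (s : ℝ) : Continuous (gaussDensity s) := by
  unfold gaussDensity
  fun_prop

lemma gd_integrable {s : ℝ} (hs : 0 < s) : Integrable (gaussDensity s) := by
  have h : gaussDensity s = fun x => (s * Real.sqrt (2 * Real.pi))⁻¹ *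
      Real.exp (-(1 / (2 * s ^ 2)) * x ^ 2) := by
    funext x
    unfold gaussDensity
    congr 1
    ring_nf
  rw [h]
  exact (integrable_exp_neg_mul_sq (by positivity)).const_mul _

lemma eq_of_sq_eq {x y : ℝ} (hx : 0 ≤ x) (hy : 0 ≤ y) (h : x ^ 2 = y ^ 2) : x = y := by
  rw [← Real.sqrt_sq hx, h, Real.sqrt_sq hy]

/-- Product of two shifted Gaussian densities integrates to a Gaussian density. -/
lemma gd_mul_integral {a b : ℝ} (ha : 0 < a) (hb : 0 < b) (u v : ℝ) :
    ∫ x : ℝ, gaussDensity a (x - u) * gaussDensity b (x - v) =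
      gaussDensity (Real.sqrt (a ^ 2 + b ^ 2)) (u - v) := by
  have hab : (0:ℝ) < a ^ 2 + b ^ 2 := by positivity
  have hpi := Real.pi_pos
  set k : ℝ := (a ^ 2 + b ^ 2) / (2 * a ^ 2 * b ^ 2) with hk
  have hkpos : 0 < k := by positivity
  set m : ℝ := (u * b ^ 2 + v * a ^ 2) / (a ^ 2 + b ^ 2) with hm
  set C : ℝ := (a * Real.sqrt (2 * Real.pi))⁻¹ * (b * Real.sqrt (2 * Real.pi))⁻¹ *
      Real.exp (-((u - v) ^ 2) / (2 * (a ^ 2 + b ^ 2))) with hC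
  have hpt : ∀ x : ℝ, gaussDensity a (x - u) * gaussDensity b (x - v)
      = C * Real.exp (-k * (x - m) ^ 2) := by
    intro x
    have e1 : -((x - u) ^ 2) / (2 * a ^ 2) + -((x - v) ^ 2) / (2 * b ^ 2)
        = -((u - v) ^ 2) / (2 * (a ^ 2 + b ^ 2)) + -k * (x - m) ^ 2 := by
      rw [hk, hm]
      field_simp
      ring
    rw [hC]
    unfold gaussDensity
    rw [mul_mul_mul_comm, ← Real.exp_add, e1, Real.exp_add]
    ring
  calc ∫ x : ℝ, gaussDensity a (x - u) * gaussDensity b (x - v)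
      = ∫ x : ℝ, C * Real.exp (-k * (x - m) ^ 2) := by
        exact integral_congr_ae (Filter.Eventually.of_forall hpt)
    _ = C * ∫ x : ℝ, Real.exp (-k * (x - m) ^ 2) := integral_const_mul _ _
    _ = C * ∫ x : ℝ, Real.exp (-k * x ^ 2) := by
        rw [integral_sub_right_eq_self (fun y => Real.exp (-k * y ^ 2)) m]
    _ = C * Real.sqrt (Real.pi / k) := by rw [integral_gaussian]
    _ = gaussDensity (Real.sqrt (a ^ 2 + b ^ 2)) (u - v) := by
        unfold gaussDensity
        rw [hC]
        have hsq : Real.sqrt (a ^ 2 + b ^ 2) ^ 2 = a ^ 2 + b ^ 2 := Real.sq_sqrt hab.le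
        rw [hsq]
        rw [mul_assoc, mul_comm (Real.exp _), ← mul_assoc]
        congr 1
        apply eq_of_sq_eq
        · have : 0 ≤ Real.sqrt (Real.pi / k) := Real.sqrt_nonneg _
          positivity
        · positivity
        · simp only [mul_inv, mul_pow, inv_pow, hsq,
            Real.sq_sqrt (by positivity : (0:ℝ) ≤ 2 * Real.pi),
            Real.sq_sqrt (by positivity : (0:ℝ) ≤ Real.pi / k)]
          rw [hk]
          field_simp

noncomputable def mix (p : Measure ℝ) (s x : ℝ) : ℝ := ∫ u, gaussDensity s (x - u) ∂p

variable {p q : Measure ℝ} {s a b c : ℝ}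

lemma mix_nonneg (hs : 0 < s) (x : ℝ) : 0 ≤ mix p s x :=
  integral_nonneg fun _ => gd_nonneg hs _

lemma gd_shift_integrable (hs : 0 < s) (x : ℝ) [IsFiniteMeasure p] :
    Integrable (fun u => gaussDensity s (x - u)) p := by
  refine Integrable.mono' (integrable_const (gaussDensity s 0))
    (((gd_cont s).comp (continuous_const.sub continuous_id)).aestronglyMeasurable)
    (Filter.Eventually.of_forall fun u => ?_)
  rw [Real.norm_eq_abs, abs_of_nonneg (gd_nonneg hs _)]
  exact gd_le hs _

lemma mix_le (hs : 0 < s) (x : ℝ) [IsProbabilityMeasure p] :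
    mix p s x ≤ gaussDensity s 0 := by
  have h := integral_mono (gd_shift_integrable hs x (p := p)) (integrable_const _)
    (fun u => gd_le hs (x - u))
  simpa [mix] using h

lemma mix_cont (hs : 0 < s) [IsFiniteMeasure p] : Continuous (mix p s) := by
  apply continuous_of_dominated (bound := fun _ => gaussDensity s 0)
  · intro x
    exact ((gd_cont s).comp (continuous_const.sub continuous_id)).aestronglyMeasurable
  · intro x
    refine Filter.Eventually.of_forall fun u => ?_
    rw [Real.norm_eq_abs, abs_of_nonneg (gd_nonneg hs _)]
    exact gd_le hs _
  · exact integrable_const _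
  · exact Filter.Eventually.of_forall fun u =>
      (gd_cont s).comp (continuous_id.sub continuous_const)

lemma mix_integrable (hs : 0 < s) [IsProbabilityMeasure q] {μ : Measure ℝ}
    [IsFiniteMeasure μ] : Integrable (mix q s) μ := by
  refine Integrable.mono' (integrable_const (gaussDensity s 0))
    (mix_cont hs).aestronglyMeasurable (Filter.Eventually.of_forall fun x => ?_)
  rw [Real.norm_eq_abs, abs_of_nonneg (mix_nonneg hs x)]
  exact mix_le hs x

lemma Q_nonneg (hc : 0 < c) (p q : Measure ℝ)
    [IsProbabilityMeasure p] [IsProbabilityMeasure q] :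
    0 ≤ ∫ u, mix q c u ∂p :=
  integral_nonneg fun u => mix_nonneg hc u

lemma Q_le (hc : 0 < c) (p q : Measure ℝ)
    [IsProbabilityMeasure p] [IsProbabilityMeasure q] :
    ∫ u, mix q c u ∂p ≤ gaussDensity c 0 := by
  have h := integral_mono (mix_integrable hc (q := q) (μ := p)) (integrable_const _)
    (fun u => mix_le hc u)
  simpa using h

lemma key (ha : 0 < a) (hb : 0 < b) (p q : Measure ℝ)
    [IsProbabilityMeasure p] [IsProbabilityMeasure q] :
    Integrable (fun x => mix p a x * mix q b x) volume ∧
    ∫ x : ℝ, mix p a x * mix q b x =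
      ∫ u, mix q (Real.sqrt (a ^ 2 + b ^ 2)) u ∂p := by
  set c := Real.sqrt (a ^ 2 + b ^ 2) with hcdef
  have hc : 0 < c := Real.sqrt_pos.mpr (by positivity)
  set fA : ℝ × ℝ → ENNReal := fun z => ENNReal.ofReal (gaussDensity a (z.1 - z.2)) with hfA
  set fB : ℝ × ℝ → ENNReal := fun z => ENNReal.ofReal (gaussDensity b (z.1 - z.2)) with hfB
  have mA : Measurable fA :=
    ENNReal.measurable_ofReal.comp
      ((gd_cont a).comp (continuous_fst.sub continuous_snd)).measurable
  have mB : Measurable fB :=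
    ENNReal.measurable_ofReal.comp
      ((gd_cont b).comp (continuous_fst.sub continuous_snd)).measurable
  set A : ℝ → ENNReal := fun x => ∫⁻ u, fA (x, u) ∂p with hA
  set B : ℝ → ENNReal := fun x => ∫⁻ v, fB (x, v) ∂q with hB
  have mAx : Measurable A := mA.lintegral_prod_right'
  have mBx : Measurable B := mB.lintegral_prod_right'
  have hAne : ∀ x, A x ≠ ⊤ := by
    intro x
    have : A x ≤ ENNReal.ofReal (gaussDensity a 0) := by
      rw [hA]
      calc ∫⁻ u, fA (x, u) ∂p ≤ ∫⁻ _, ENNReal.ofReal (gaussDensity a 0) ∂p :=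
            lintegral_mono fun u => ENNReal.ofReal_le_ofReal (gd_le ha _)
        _ = ENNReal.ofReal (gaussDensity a 0) := by simp
    exact (this.trans_lt ENNReal.ofReal_lt_top).ne
  have hBne : ∀ x, B x ≠ ⊤ := by
    intro x
    have : B x ≤ ENNReal.ofReal (gaussDensity b 0) := by
      rw [hB]
      calc ∫⁻ v, fB (x, v) ∂q ≤ ∫⁻ _, ENNReal.ofReal (gaussDensity b 0) ∂q :=
            lintegral_mono fun v => ENNReal.ofReal_le_ofReal (gd_le hb _)
        _ = ENNReal.ofReal (gaussDensity b 0) := by simp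
    exact (this.trans_lt ENNReal.ofReal_lt_top).ne
  have hmixA : ∀ x, mix p a x = (A x).toReal := by
    intro x
    rw [mix, integral_eq_lintegral_of_nonneg_ae
      (Filter.Eventually.of_forall fun u => gd_nonneg ha _)
      (Continuous.aestronglyMeasurable
        (show Continuous fun u : ℝ => gaussDensity a (x - u) from
          (gd_cont a).comp (continuous_sub_left x)))]
  have hmixB : ∀ x, mix q b x = (B x).toReal := by
    intro x
    rw [mix, integral_eq_lintegral_of_nonneg_ae
      (Filter.Eventually.of_forall fun u => gd_nonneg hb _)
      (Continuous.aestronglyMeasurable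
        (show Continuous fun u : ℝ => gaussDensity b (x - u) from
          (gd_cont b).comp (continuous_sub_left x)))]
  have inner_eq : ∀ u v : ℝ,
      (∫⁻ x : ℝ, fA (x, u) * fB (x, v)) = ENNReal.ofReal (gaussDensity c (u - v)) := by
    intro u v
    have hint : Integrable (fun x : ℝ => gaussDensity a (x - u) * gaussDensity b (x - v))
        volume := by
      refine Integrable.bdd_mul ((gd_integrable hb).comp_sub_right v)
        ((gd_cont a).comp (continuous_id.sub continuous_const)).aestronglyMeasurable
        (c := gaussDensity a 0) (Filter.Eventually.of_forall fun x => ?_)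
      rw [Real.norm_eq_abs, abs_of_nonneg (gd_nonneg ha _)]
      exact gd_le ha _
    have : (∫⁻ x : ℝ, fA (x, u) * fB (x, v))
        = ∫⁻ x : ℝ, ENNReal.ofReal (gaussDensity a (x - u) * gaussDensity b (x - v)) := by
      simp_rw [hfA, hfB, ENNReal.ofReal_mul (gd_nonneg ha _)]
    rw [this, ← ofReal_integral_eq_lintegral_ofReal hint
      (Filter.Eventually.of_forall fun x => mul_nonneg (gd_nonneg ha _) (gd_nonneg hb _)),
      gd_mul_integral ha hb u v]
  have swap1 : (∫⁻ x : ℝ, A x * B x)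
      = ∫⁻ u, ∫⁻ v, ENNReal.ofReal (gaussDensity c (u - v)) ∂q ∂p := by
    have e1 : ∀ x : ℝ, A x * B x = ∫⁻ u, ∫⁻ v, fA (x, u) * fB (x, v) ∂q ∂p := by
      intro x
      have m1 : Measurable fun u => fA (x, u) :=
        mA.comp (measurable_const.prodMk measurable_id)
      have m2 : Measurable fun v => fB (x, v) :=
        mB.comp (measurable_const.prodMk measurable_id)
      calc A x * B x = ∫⁻ u, fA (x, u) * B x ∂p := (lintegral_mul_const (B x) m1).symm
        _ = ∫⁻ u, ∫⁻ v, fA (x, u) * fB (x, v) ∂q ∂p :=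
            lintegral_congr fun u => (lintegral_const_mul (fA (x, u)) m2).symm
    calc (∫⁻ x : ℝ, A x * B x)
        = ∫⁻ x : ℝ, ∫⁻ u, ∫⁻ v, fA (x, u) * fB (x, v) ∂q ∂p := lintegral_congr e1
      _ = ∫⁻ u, (∫⁻ x : ℝ, ∫⁻ v, fA (x, u) * fB (x, v) ∂q) ∂p := by
          refine lintegral_lintegral_swap
            (f := fun x u => ∫⁻ v, fA (x, u) * fB (x, v) ∂q) ?_
          refine Measurable.aemeasurable ?_
          refine Measurable.lintegral_prod_right'
            (f := fun (w : (ℝ × ℝ) × ℝ) => fA w.1 * fB (w.1.1, w.2)) ?_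
          exact (mA.comp measurable_fst).mul
            (mB.comp ((measurable_fst.comp measurable_fst).prodMk measurable_snd))
      _ = ∫⁻ u, (∫⁻ v, (∫⁻ x : ℝ, fA (x, u) * fB (x, v)) ∂q) ∂p := by
          refine lintegral_congr fun u => ?_
          refine lintegral_lintegral_swap
            (f := fun (x v : ℝ) => fA (x, u) * fB (x, v)) ?_
          refine Measurable.aemeasurable ?_
          exact (mA.comp (measurable_fst.prodMk measurable_const)).mul mB
      _ = ∫⁻ u, ∫⁻ v, ENNReal.ofReal (gaussDensity c (u - v)) ∂q ∂p := by
          refine lintegral_congr fun u => ?_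
          exact lintegral_congr fun v => inner_eq u v
  have ofReal_Q : (∫⁻ u, ∫⁻ v, ENNReal.ofReal (gaussDensity c (u - v)) ∂q ∂p)
      = ENNReal.ofReal (∫ u, mix q c u ∂p) := by
    have e2 : ∀ u : ℝ, (∫⁻ v, ENNReal.ofReal (gaussDensity c (u - v)) ∂q)
        = ENNReal.ofReal (mix q c u) := fun u =>
      (ofReal_integral_eq_lintegral_ofReal (gd_shift_integrable hc u)
        (Filter.Eventually.of_forall fun v => gd_nonneg hc _)).symm
    simp_rw [e2]
    exact (ofReal_integral_eq_lintegral_ofReal (mix_integrable hc)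
      (Filter.Eventually.of_forall fun u => mix_nonneg hc u)).symm
  have hfin : (∫⁻ x : ℝ, A x * B x) ≠ ⊤ := by
    rw [swap1, ofReal_Q]; exact ENNReal.ofReal_ne_top
  have hfun : (fun x => mix p a x * mix q b x) = fun x => (A x * B x).toReal := by
    funext x
    rw [hmixA x, hmixB x, ENNReal.toReal_mul]
  constructor
  · rw [hfun]
    exact integrable_toReal_of_lintegral_ne_top (mAx.mul mBx).aemeasurable hfin
  · rw [hfun, integral_toReal (f := fun x => A x * B x) (mAx.mul mBx).aemeasurable
      (Filter.Eventually.of_forall fun x =>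
        ENNReal.mul_lt_top (hAne x).lt_top (hBne x).lt_top),
      swap1, ofReal_Q, ENNReal.toReal_ofReal (Q_nonneg hc p q)]

lemma expand (ha : 0 < a) (hb : 0 < b) (p q : Measure ℝ)
    [IsProbabilityMeasure p] [IsProbabilityMeasure q] :
    Integrable (fun x => (mix p a x - mix q a x) * (mix p b x - mix q b x)) volume ∧
    ∫ x : ℝ, (mix p a x - mix q a x) * (mix p b x - mix q b x)
      = (∫ u, mix p (Real.sqrt (a ^ 2 + b ^ 2)) u ∂p)
        - (∫ u, mix q (Real.sqrt (a ^ 2 + b ^ 2)) u ∂p)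
        - (∫ u, mix p (Real.sqrt (a ^ 2 + b ^ 2)) u ∂q)
        + (∫ u, mix q (Real.sqrt (a ^ 2 + b ^ 2)) u ∂q) := by
  obtain ⟨i1, e1⟩ := key ha hb p p
  obtain ⟨i2, e2⟩ := key ha hb p q
  obtain ⟨i3, e3⟩ := key ha hb q p
  obtain ⟨i4, e4⟩ := key ha hb q q
  have hfe : (fun x => (mix p a x - mix q a x) * (mix p b x - mix q b x))
      = fun x => (mix p a x * mix p b x - mix p a x * mix q b x)
          - (mix q a x * mix p b x - mix q a x * mix q b x) := by
    funext x; ring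
  have i12 : Integrable (fun x => mix p a x * mix p b x - mix p a x * mix q b x) volume :=
    i1.sub i2
  have i34 : Integrable (fun x => mix q a x * mix p b x - mix q a x * mix q b x) volume :=
    i3.sub i4
  constructor
  · rw [hfe]; exact i12.sub i34
  · rw [hfe, integral_sub i12 i34, integral_sub i1 i2, integral_sub i3 i4,
      e1, e2, e3, e4]
    ring

end MixAux

open MixAux in
/-- Deterministic version of Lemma 2 of the paper: if the Gaussian mixtures of the compactly
supported mixing distributions `g_n` converge in `L²` to the Gaussian mixture of `g` at the
noise scale `σ`, then the same holds at every noise scale `τ > 0`. -/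
theorem mixture_L2_convergence_transfer
    (M σ : ℝ) (hM : 0 < M) (hσ : 0 < σ)
    (gseq : ℕ → Measure ℝ) (g : Measure ℝ)
    [∀ n, IsProbabilityMeasure (gseq n)] [IsProbabilityMeasure g]
    (hsuppseq : ∀ n, gseq n (Set.Icc (-M) M)ᶜ = 0)
    (hsupp : g (Set.Icc (-M) M)ᶜ = 0)
    (hconv : Tendsto (fun n =>
        ∫ x : ℝ, ((∫ u, gaussDensity σ (x - u) ∂(gseq n)) -
            ∫ u, gaussDensity σ (x - u) ∂g) ^ 2) atTop (nhds 0)) :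
    ∀ τ : ℝ, 0 < τ →
      Tendsto (fun n =>
          ∫ x : ℝ, ((∫ u, gaussDensity τ (x - u) ∂(gseq n)) -
              ∫ u, gaussDensity τ (x - u) ∂g) ^ 2) atTop (nhds 0) := by
  intro τ hτ
  set D : ℕ → ℝ → ℝ := fun n t =>
    ∫ x : ℝ, (mix (gseq n) (Real.sqrt t) x - mix g (Real.sqrt t) x) ^ 2 with hD
  set E : ℕ → ℝ → ℝ := fun n c =>
    (∫ u, mix (gseq n) c u ∂(gseq n)) - (∫ u, mix g c u ∂(gseq n))
      - (∫ u, mix (gseq n) c u ∂g) + (∫ u, mix g c u ∂g) with hE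
  have hDnonneg : ∀ n t, 0 ≤ D n t := fun n t => integral_nonneg fun x => sq_nonneg _
  have hcross : ∀ (n : ℕ) (a b : ℝ), 0 < a → 0 < b →
      ∫ x : ℝ, (mix (gseq n) a x - mix g a x) * (mix (gseq n) b x - mix g b x)
        = E n (Real.sqrt (a ^ 2 + b ^ 2)) := by
    intro n a b ha hb
    rw [hE]
    exact (expand ha hb (gseq n) g).2
  have hDeq : ∀ (n : ℕ) (t : ℝ), 0 < t → D n t = E n (Real.sqrt (2 * t)) := by
    intro n t ht
    have hst : 0 < Real.sqrt t := Real.sqrt_pos.mpr ht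
    have h2t : Real.sqrt t ^ 2 + Real.sqrt t ^ 2 = 2 * t := by
      rw [Real.sq_sqrt ht.le]; ring
    have := hcross n (Real.sqrt t) (Real.sqrt t) hst hst
    rw [h2t] at this
    rw [hD]
    simp only [pow_two]
    exact this
  have hEle : ∀ (n : ℕ) (c : ℝ), 0 < c → E n c ≤ 2 * gaussDensity c 0 := by
    intro n c hc
    have h1 := Q_le hc (gseq n) (gseq n)
    have h2 := Q_le hc g g
    have h3 := Q_nonneg hc (gseq n) g
    have h4 := Q_nonneg hc g (gseq n)
    rw [hE]
    dsimp only
    linarith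
  have hDle : ∀ (n : ℕ) (t : ℝ), 0 < t → D n t ≤ 2 * gaussDensity (Real.sqrt (2 * t)) 0 := by
    intro n t ht
    rw [hDeq n t ht]
    exact hEle n _ (Real.sqrt_pos.mpr (by linarith))
  -- the transfer step
  have hstep : ∀ s : ℝ, 0 < s → Tendsto (fun n => D n s) atTop (nhds 0) →
      ∀ t : ℝ, s / 2 < t → Tendsto (fun n => D n t) atTop (nhds 0) := by
    intro s hs hcs t ht
    have htpos : 0 < t := lt_of_le_of_lt (by positivity) ht
    set t0 : ℝ := 2 * t - s with ht0def
    have ht0 : 0 < t0 := by rw [ht0def]; linarith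
    have hst0 : 0 < Real.sqrt t0 := Real.sqrt_pos.mpr ht0
    have hss : 0 < Real.sqrt s := Real.sqrt_pos.mpr hs
    set B : ℝ := 2 * gaussDensity (Real.sqrt (2 * t0)) 0 with hBdef
    have hBnn : 0 ≤ B := by
      rw [hBdef]
      have := gd_nonneg (Real.sqrt_pos.mpr (by linarith : (0:ℝ) < 2 * t0)) 0
      linarith
    have hid : ∀ n, D n t = ∫ x : ℝ,
        (mix (gseq n) (Real.sqrt t0) x - mix g (Real.sqrt t0) x) *
          (mix (gseq n) (Real.sqrt s) x - mix g (Real.sqrt s) x) := by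
      intro n
      rw [hDeq n t htpos, hcross n _ _ hst0 hss]
      congr 2
      rw [Real.sq_sqrt ht0.le, Real.sq_sqrt hs.le, ht0def]
      ring
    rw [NormedAddCommGroup.tendsto_nhds_zero]
    intro δ hδ
    set ε : ℝ := δ / (B + 1) with hεdef
    have hεpos : 0 < ε := by rw [hεdef]; positivity
    have hbound : ∀ n, D n t ≤ (ε * B + ε⁻¹ * D n s) / 2 := by
      intro n
      have iaa := (expand hst0 hst0 (gseq n) g).1
      have ibb := (expand hss hss (gseq n) g).1
      have iab := (expand hst0 hss (gseq n) g).1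
      have iR : Integrable (fun x : ℝ =>
          (ε * ((mix (gseq n) (Real.sqrt t0) x - mix g (Real.sqrt t0) x) *
              (mix (gseq n) (Real.sqrt t0) x - mix g (Real.sqrt t0) x))
            + ε⁻¹ * ((mix (gseq n) (Real.sqrt s) x - mix g (Real.sqrt s) x) *
              (mix (gseq n) (Real.sqrt s) x - mix g (Real.sqrt s) x))) / 2) volume :=
        ((iaa.const_mul ε).add (ibb.const_mul ε⁻¹)).div_const 2
      have hmono := integral_mono (μ := volume) iab iR
        (fun x => by
          have h1 := sq_nonneg (ε * (mix (gseq n) (Real.sqrt t0) x - mix g (Real.sqrt t0) x)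
            - (mix (gseq n) (Real.sqrt s) x - mix g (Real.sqrt s) x))
          have h2 : ε * ε⁻¹ = 1 := mul_inv_cancel₀ hεpos.ne'
          dsimp only
          nlinarith [hεpos, h1, h2])
      have hInt : (∫ x : ℝ, (ε * ((mix (gseq n) (Real.sqrt t0) x - mix g (Real.sqrt t0) x) *
              (mix (gseq n) (Real.sqrt t0) x - mix g (Real.sqrt t0) x))
            + ε⁻¹ * ((mix (gseq n) (Real.sqrt s) x - mix g (Real.sqrt s) x) *
              (mix (gseq n) (Real.sqrt s) x - mix g (Real.sqrt s) x))) / 2)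
          = (ε * (∫ x : ℝ, (mix (gseq n) (Real.sqrt t0) x - mix g (Real.sqrt t0) x) *
              (mix (gseq n) (Real.sqrt t0) x - mix g (Real.sqrt t0) x))
            + ε⁻¹ * (∫ x : ℝ, (mix (gseq n) (Real.sqrt s) x - mix g (Real.sqrt s) x) *
              (mix (gseq n) (Real.sqrt s) x - mix g (Real.sqrt s) x))) / 2 := by
        rw [integral_div, integral_add (iaa.const_mul ε) (ibb.const_mul ε⁻¹),
          integral_const_mul, integral_const_mul]
      have hDt0 : (∫ x : ℝ, (mix (gseq n) (Real.sqrt t0) x - mix g (Real.sqrt t0) x) *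
          (mix (gseq n) (Real.sqrt t0) x - mix g (Real.sqrt t0) x)) = D n t0 := by
        rw [hD]; simp only [pow_two]
      have hDs : (∫ x : ℝ, (mix (gseq n) (Real.sqrt s) x - mix g (Real.sqrt s) x) *
          (mix (gseq n) (Real.sqrt s) x - mix g (Real.sqrt s) x)) = D n s := by
        rw [hD]; simp only [pow_two]
      rw [hid n]
      calc (∫ x : ℝ, (mix (gseq n) (Real.sqrt t0) x - mix g (Real.sqrt t0) x) *
            (mix (gseq n) (Real.sqrt s) x - mix g (Real.sqrt s) x))
          ≤ _ := hmono
        _ = (ε * D n t0 + ε⁻¹ * D n s) / 2 := by rw [hInt, hDt0, hDs]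
        _ ≤ (ε * B + ε⁻¹ * D n s) / 2 := by
            have hb := hDle n t0 ht0
            have : ε * D n t0 ≤ ε * B := by
              apply mul_le_mul_of_nonneg_left _ hεpos.le
              rw [hBdef] at *
              exact hb
            linarith
    have hRHS : Tendsto (fun n => (ε * B + ε⁻¹ * D n s) / 2) atTop
        (nhds ((ε * B + ε⁻¹ * 0) / 2)) :=
      ((tendsto_const_nhds.add (hcs.const_mul ε⁻¹)).div_const 2)
    have hεB : ε * (B + 1) = δ := div_mul_cancel₀ δ (by linarith : B + 1 ≠ 0)
    have hlt : (ε * B + ε⁻¹ * 0) / 2 < δ := by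
      rw [mul_zero, add_zero]
      nlinarith
    have hev := hRHS.eventually_lt_const hlt
    filter_upwards [hev] with n hn
    rw [Real.norm_eq_abs, abs_of_nonneg (hDnonneg n t)]
    exact lt_of_le_of_lt (hbound n) hn
  -- base case
  have hbase : Tendsto (fun n => D n (σ ^ 2)) atTop (nhds 0) := by
    have hss : Real.sqrt (σ ^ 2) = σ := Real.sqrt_sq hσ.le
    have : (fun n => D n (σ ^ 2)) = fun n =>
        ∫ x : ℝ, ((∫ u, gaussDensity σ (x - u) ∂(gseq n)) -
            ∫ u, gaussDensity σ (x - u) ∂g) ^ 2 := by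
      funext n
      rw [hD]
      simp only [hss, mix]
    rw [this]
    exact hconv
  -- iterate
  have hiter : ∀ k : ℕ, Tendsto (fun n => D n ((3/4 : ℝ) ^ k * σ ^ 2)) atTop (nhds 0) := by
    intro k
    induction k with
    | zero => simpa using hbase
    | succ k ih =>
      have hk : (0:ℝ) < (3/4 : ℝ) ^ k * σ ^ 2 := by positivity
      refine hstep ((3/4 : ℝ) ^ k * σ ^ 2) hk ih _ ?_
      rw [pow_succ (3/4 : ℝ) k]
      have h3 : (0:ℝ) < (3/4 : ℝ) ^ k := by positivity
      nlinarith [mul_pos h3 (mul_pos hσ hσ)]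
  -- conclude
  obtain ⟨k, hk⟩ := exists_pow_lt_of_lt_one
    (show (0:ℝ) < 2 * τ ^ 2 / σ ^ 2 by positivity) (show (3/4 : ℝ) < 1 by norm_num)
  have hks : (3/4 : ℝ) ^ k * σ ^ 2 < 2 * τ ^ 2 := by
    have h2 := mul_lt_mul_of_pos_right hk (pow_pos hσ 2)
    rwa [div_mul_cancel₀ _ (pow_pos hσ 2).ne'] at h2
  have hfinal := hstep ((3/4 : ℝ) ^ k * σ ^ 2) (by positivity) (hiter k) (τ ^ 2)
    (by linarith)
  have hτs : Real.sqrt (τ ^ 2) = τ := Real.sqrt_sq hτ.le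
  have : (fun n => D n (τ ^ 2)) = fun n =>
      ∫ x : ℝ, ((∫ u, gaussDensity τ (x - u) ∂(gseq n)) -
          ∫ u, gaussDensity τ (x - u) ∂g) ^ 2 := by
    funext n
    rw [hD]
    simp only [hτs, mix]
  rw [← this]
  exact hfinal
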